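/- Let X be a random d×d real symmetric matrix with X ⪯ I almost surely and E[X] = 0. Then E[exp(X)] ⪯ I + E[X²]. -/

import Mathlib

open MeasureTheory Matrix

lemma exp_le_one_add_add_sq {x : ℝ} (hx : x ≤ 1) : Real.exp x ≤ 1 + x + x ^ 2 := by
  rcases le_or_gt x 0 with h | h
  · have h1 : (-x) + 1 ≤ Real.exp (-x) := Real.add_one_le_exp _
    have hme : Real.exp x * Real.exp (-x) = 1 := by rw [← Real.exp_add]; simp
    have key : Real.exp x * (1 - x) ≤ 1 := by nlinarith [Real.exp_pos x]
    have hpos : (0:ℝ) < 1 - x := by linarith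
    nlinarith [Real.exp_pos x]
  · have hb := Real.exp_bound' h.le hx (n := 3) (by norm_num)
    have h3 : x ^ 3 ≤ x ^ 2 := by nlinarith
    norm_num [Finset.sum_range_succ, Nat.factorial] at hb
    nlinarith [hb]

lemma conj_diag_psd {d : ℕ} (U : Matrix (Fin d) (Fin d) ℝ) (f : Fin d → ℝ)
    (hU1 : U * star U = 1) (hU2 : star U * U = 1) (hf : ∀ i, f i ≤ 1) :
    (1 + (U * diagonal f * star U) + (U * diagonal f * star U) ^ 2
      - NormedSpace.exp (U * diagonal f * star U)).PosSemidef := by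
  have hUunit : IsUnit U := ⟨⟨U, star U, hU1, hU2⟩, rfl⟩
  have hUinv : U⁻¹ = star U := inv_eq_right_inv hU1
  have hsq : (U * diagonal f * star U) ^ 2 = U * diagonal (fun i => f i ^ 2) * star U := by
    rw [pow_two, show U * diagonal f * star U * (U * diagonal f * star U)
        = U * (diagonal f * (star U * U) * diagonal f) * star U by noncomm_ring,
      hU2, mul_one, diagonal_mul_diagonal,
      show (fun i => f i * f i) = fun i => f i ^ 2 from funext fun i => (sq (f i)).symm]
  have hexp : NormedSpace.exp (U * diagonal f * star U)
      = U * diagonal (fun i => Real.exp (f i)) * star U := by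
    rw [← hUinv, Matrix.exp_conj U _ hUunit, Matrix.exp_diagonal,
      show NormedSpace.exp f = fun i => Real.exp (f i) from by
        rw [Pi.exp_def, ← Real.exp_eq_exp_ℝ]]
  have hone : (1 : Matrix (Fin d) (Fin d) ℝ) = U * diagonal (fun _ => (1:ℝ)) * star U := by
    rw [diagonal_one, mul_one, hU1]
  have key : 1 + (U * diagonal f * star U) + (U * diagonal f * star U) ^ 2
      - NormedSpace.exp (U * diagonal f * star U)
      = U * diagonal (fun i => 1 + f i + f i ^ 2 - Real.exp (f i)) * star U := by
    rw [hexp, hsq]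
    conv_lhs => rw [hone]
    rw [show ∀ P Q R S : Matrix (Fin d) (Fin d) ℝ,
      U * P * star U + U * Q * star U + U * R * star U - U * S * star U
        = U * (P + Q + R - S) * star U from fun P Q R S => by noncomm_ring]
    rw [diagonal_add, diagonal_add, diagonal_sub]
  rw [key, Matrix.star_eq_conjTranspose]
  refine Matrix.PosSemidef.mul_mul_conjTranspose_same ?_ U
  refine Matrix.PosSemidef.diagonal fun i => ?_
  have := exp_le_one_add_add_sq (hf i)
  simpa using this

lemma herm_apply_symm {d : ℕ} {A : Matrix (Fin d) (Fin d) ℝ} (hA : A.IsHermitian)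
    (a b : Fin d) : A b a = A a b := by
  conv_lhs => rw [← hA]
  simp [Matrix.conjTranspose_apply]

lemma eig_le_one {d : ℕ} {A : Matrix (Fin d) (Fin d) ℝ} (hA : A.IsHermitian)
    (h : ((1 : Matrix (Fin d) (Fin d) ℝ) - A).PosSemidef) (i : Fin d) :
    hA.eigenvalues i ≤ 1 := by
  set v : EuclideanSpace ℝ (Fin d) := hA.eigenvectorBasis i with hv
  have hv1 : star (⇑v) ⬝ᵥ (⇑v) = 1 := by
    have := EuclideanSpace.inner_eq_star_dotProduct v v
    rw [inner_self_eq_norm_sq_to_K] at this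
    rw [dotProduct_comm, ← this]
    simp [hA.eigenvectorBasis.orthonormal.1 i]
    exact Or.inl (hA.eigenvectorBasis.orthonormal.1 i)
  have h2 := h.dotProduct_mulVec_nonneg (⇑v)
  rw [sub_mulVec, one_mulVec, dotProduct_sub, hA.mulVec_eigenvectorBasis i,
    dotProduct_smul, hv1] at h2
  simp only [smul_eq_mul, mul_one] at h2
  linarith

lemma pointwise_psd {d : ℕ} {A : Matrix (Fin d) (Fin d) ℝ} (hA : A.IsHermitian)
    (h : ((1 : Matrix (Fin d) (Fin d) ℝ) - A).PosSemidef) :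
    (1 + A + A ^ 2 - NormedSpace.exp A).PosSemidef := by
  have hev := eig_le_one hA h
  have hD : (RCLike.ofReal ∘ hA.eigenvalues : Fin d → ℝ) = hA.eigenvalues := by
    funext i; simp [RCLike.ofReal_real_eq_id]
  have spec : A = (hA.eigenvectorUnitary : Matrix (Fin d) (Fin d) ℝ)
      * diagonal hA.eigenvalues * star (hA.eigenvectorUnitary : Matrix (Fin d) (Fin d) ℝ) := by
    conv_lhs => rw [hA.spectral_theorem]
    rw [hD, Unitary.conjStarAlgAut_apply]
  rw [spec]
  exact conj_diag_psd _ _ (mem_unitaryGroup_iff.mp hA.eigenvectorUnitary.2)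
    (mem_unitaryGroup_iff'.mp hA.eigenvectorUnitary.2) hev

/-- For a random real symmetric matrix `X` with `X ⪯ I` almost surely and `E[X] = 0`,
we have `E[exp(X)] ⪯ I + E[X²]` (Loewner order; expectations taken entrywise). -/
theorem expectation_matrix_exp_le
    {d : ℕ} {Ω : Type*} [MeasurableSpace Ω] (μ : Measure Ω) [IsProbabilityMeasure μ]
    (X : Ω → Matrix (Fin d) (Fin d) ℝ)
    (hmeas : ∀ a b, Measurable fun ω => X ω a b)
    (hsym : ∀ ω, (X ω).IsHermitian)
    (hle : ∀ᵐ ω ∂μ, ((1 : Matrix (Fin d) (Fin d) ℝ) - X ω).PosSemidef)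
    (hIntX : ∀ a b, Integrable (fun ω => X ω a b) μ)
    (hmean : ∀ a b, ∫ ω, X ω a b ∂μ = 0)
    (hIntExp : ∀ a b, Integrable (fun ω => NormedSpace.exp (X ω) a b) μ)
    (hIntSq : ∀ a b, Integrable (fun ω => (X ω ^ 2) a b) μ) :
    ((1 + (Matrix.of fun a b => ∫ ω, (X ω ^ 2) a b ∂μ))
      - (Matrix.of fun a b => ∫ ω, NormedSpace.exp (X ω) a b ∂μ)).PosSemidef := by
  set M : Ω → Matrix (Fin d) (Fin d) ℝ :=
    fun ω => 1 + X ω + X ω ^ 2 - NormedSpace.exp (X ω) with hM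
  -- entrywise integrability of M
  have hIntM : ∀ a b, Integrable (fun ω => M ω a b) μ := by
    intro a b
    have : (fun ω => M ω a b) = fun ω =>
        (1 : Matrix (Fin d) (Fin d) ℝ) a b + X ω a b + (X ω ^ 2) a b
          - NormedSpace.exp (X ω) a b := by
      funext ω; simp [hM, Matrix.add_apply, Matrix.sub_apply]
    rw [this]
    exact (((integrable_const _).add (hIntX a b)).add (hIntSq a b)).sub (hIntExp a b)
  have hIntMval : ∀ a b, ∫ ω, M ω a b ∂μ =
      (1 : Matrix (Fin d) (Fin d) ℝ) a b
        + (∫ ω, (X ω ^ 2) a b ∂μ) - (∫ ω, NormedSpace.exp (X ω) a b ∂μ) := by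
    intro a b
    have h1 : (fun ω => M ω a b) = fun ω =>
        ((1 : Matrix (Fin d) (Fin d) ℝ) a b + X ω a b + (X ω ^ 2) a b)
          - NormedSpace.exp (X ω) a b := by
      funext ω; simp [hM, Matrix.add_apply, Matrix.sub_apply]
    have i0 : Integrable (fun _ : Ω => (1 : Matrix (Fin d) (Fin d) ℝ) a b) μ :=
      integrable_const _
    have i1 : Integrable (fun ω => (1 : Matrix (Fin d) (Fin d) ℝ) a b + X ω a b) μ :=
      i0.add (hIntX a b)
    have i2 : Integrable
        (fun ω => (1 : Matrix (Fin d) (Fin d) ℝ) a b + X ω a b + (X ω ^ 2) a b) μ :=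
      i1.add (hIntSq a b)
    rw [h1, integral_sub i2 (hIntExp a b), integral_add i1 (hIntSq a b),
      integral_add i0 (hIntX a b), integral_const, hmean a b]
    simp
  refine Matrix.PosSemidef.of_dotProduct_mulVec_nonneg ?_ ?_
  · -- Hermitian
    have hSq : ∀ ω, ((X ω ^ 2) : Matrix (Fin d) (Fin d) ℝ).IsHermitian :=
      fun ω => (hsym ω).pow 2
    have hExpH : ∀ ω, (NormedSpace.exp (X ω)).IsHermitian := fun ω => by
      have := Matrix.exp_conjTranspose (X ω)
      rw [Matrix.IsHermitian] at *
      rw [← this, hsym ω]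
    rw [Matrix.IsHermitian]
    ext a b
    simp only [Matrix.conjTranspose_apply, Matrix.sub_apply, Matrix.add_apply, Matrix.of_apply,
      star_trivial]
    rw [show ∫ ω, (X ω ^ 2) b a ∂μ = ∫ ω, (X ω ^ 2) a b ∂μ from
        integral_congr_ae (Filter.Eventually.of_forall fun ω => herm_apply_symm (hSq ω) a b),
      show ∫ ω, NormedSpace.exp (X ω) b a ∂μ = ∫ ω, NormedSpace.exp (X ω) a b ∂μ from
        integral_congr_ae (Filter.Eventually.of_forall fun ω => herm_apply_symm (hExpH ω) a b),
      herm_apply_symm (Matrix.isHermitian_one) a b]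
  · intro x
    have qf : ∀ N : Matrix (Fin d) (Fin d) ℝ,
        star x ⬝ᵥ N *ᵥ x = ∑ a, ∑ b, x a * N a b * x b := by
      intro N
      simp [dotProduct, mulVec, Finset.mul_sum, mul_assoc]
    have hgint : ∀ a b, Integrable (fun ω => x a * M ω a b * x b) μ := fun a b => by
      simpa [mul_assoc, mul_comm, mul_left_comm] using ((hIntM a b).const_mul (x a)).mul_const (x b)
    have hint : Integrable (fun ω => star x ⬝ᵥ M ω *ᵥ x) μ := by
      have : (fun ω => star x ⬝ᵥ M ω *ᵥ x)
          = fun ω => ∑ a, ∑ b, x a * M ω a b * x b := by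
        funext ω; rw [qf]
      rw [this]
      exact integrable_finset_sum _ fun a _ => integrable_finset_sum _ fun b _ => hgint a b
    have hnonneg : 0 ≤ ∫ ω, star x ⬝ᵥ M ω *ᵥ x ∂μ := by
      refine integral_nonneg_of_ae ?_
      filter_upwards [hle] with ω hω
      exact (pointwise_psd (hsym ω) hω).dotProduct_mulVec_nonneg x
    have hval : ∫ ω, star x ⬝ᵥ M ω *ᵥ x ∂μ = ∑ a, ∑ b, x a * (∫ ω, M ω a b ∂μ) * x b := by
      rw [show (fun ω => star x ⬝ᵥ M ω *ᵥ x)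
          = fun ω => ∑ a, ∑ b, x a * M ω a b * x b from funext fun ω => qf _]
      rw [integral_finset_sum _ fun a _ => integrable_finset_sum _ fun b _ => hgint a b]
      refine Finset.sum_congr rfl fun a _ => ?_
      rw [integral_finset_sum _ fun b _ => hgint a b]
      refine Finset.sum_congr rfl fun b _ => ?_
      rw [show (fun ω => x a * M ω a b * x b) = fun ω => x a * (M ω a b * x b) from
        funext fun ω => mul_assoc _ _ _, integral_const_mul, integral_mul_const, mul_assoc]
    rw [qf]
    rw [hval] at hnonneg
    refine le_of_le_of_eq hnonneg (Finset.sum_congr rfl fun a _ => Finset.sum_congr rfl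
      fun b _ => ?_)
    rw [hIntMval a b]
    simp only [Matrix.sub_apply, Matrix.add_apply, Matrix.of_apply]
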